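/- The maximum over all indices i with N/2+1 ≤ i ≤ N of Θ_i is bounded by 2·max{σ/α, 1}·N^{−1}·sup_{t ∈ [0,1/2]} |ψ′(t)|. -/

import Mathlib

/-- The maximum over all indices `i` with `N/2+1 ≤ i ≤ N` of
`Θ_i = min{h_i/ε, 1}·ψ(1 − t_i)` is bounded by
`2·max{σ/α, 1}·N⁻¹·sup_{t ∈ [0,1/2]} |ψ'(t)|`. -/
lemma min_scale (k x : ℝ) (hx : 0 ≤ x) : min (k*x) 1 ≤ max k 1 * min x 1 := by
  rcases le_total x 1 with h | h
  · calc min (k*x) 1 ≤ k*x := min_le_left _ _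
      _ ≤ max k 1 * min x 1 := by
          rw [min_eq_left h]
          exact mul_le_mul_of_nonneg_right (le_max_left _ _) hx
  · calc min (k*x) 1 ≤ 1 := min_le_right _ _
      _ ≤ max k 1 * min x 1 := by rw [min_eq_right h, mul_one]; exact le_max_right _ _

lemma min_le_two_exp (x : ℝ) (hx : 0 ≤ x) : min x 1 ≤ 2 * (1 - Real.exp (-x)) := by
  rcases le_total x 1 with h | h
  · rw [min_eq_left h]
    have h1 : (1 + x) * Real.exp (-x) ≤ 1 := by
      have := Real.add_one_le_exp x
      have hpos := Real.exp_pos (-x)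
      have : (1 + x) * Real.exp (-x) ≤ Real.exp x * Real.exp (-x) := by nlinarith
      rwa [← Real.exp_add, add_neg_cancel, Real.exp_zero] at this
    nlinarith [Real.exp_pos (-x)]
  · rw [min_eq_right h]
    have h1 : Real.exp (-x) ≤ Real.exp (-1) := Real.exp_le_exp.2 (by linarith)
    have h2 : Real.exp (-1) < 1/2 := by
      rw [Real.exp_neg]
      nlinarith [Real.exp_one_gt_d9, mul_inv_cancel₀ (ne_of_gt (Real.exp_pos 1)),
        inv_pos.2 (Real.exp_pos 1)]
    linarith

theorem theta_max_bound
    (α σ ε : ℝ) (hα : 0 < α) (hσ : 0 < σ) (hε : 0 < ε)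
    (N : ℕ) (hN4 : 4 ≤ N) (hNeven : Even N)
    (φ φ' : ℝ → ℝ)
    (hφderiv : ∀ t ∈ Set.Icc (0:ℝ) (1/2), HasDerivAt φ (φ' t) t)
    (hφ'cont : ContinuousOn φ' (Set.Icc (0:ℝ) (1/2)))
    (hφ0 : φ 0 = 0)
    (hφ'pos : ∀ t ∈ Set.Icc (0:ℝ) (1/2), 0 < φ' t)
    (ψ : ℝ → ℝ) (hψ : ∀ t, ψ t = Real.exp (-φ t)) :
    ∀ i : ℕ, N / 2 + 1 ≤ i → i ≤ N →
      min ((σ * ε / α) * (φ (1 - ((i:ℝ) - 1) / N) - φ (1 - (i:ℝ) / N)) / ε) 1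
          * ψ (1 - (i:ℝ) / N)
        ≤ 2 * max (σ / α) 1 * (1 / N)
            * sSup ((fun t => |deriv ψ t|) '' Set.Icc (0:ℝ) (1/2)) := by
  intro i hi1 hi2
  have hNpos : (0:ℝ) < N := by positivity
  set a : ℝ := 1 - (i:ℝ)/N with ha_def
  set b : ℝ := 1 - ((i:ℝ)-1)/N with hb_def
  obtain ⟨m, hm⟩ := hNeven
  have hmi : m + 1 ≤ i := by omega
  have hiR : ((N:ℝ)/2 + 1) ≤ (i:ℝ) := by
    have : ((m:ℝ) + 1) ≤ (i:ℝ) := by exact_mod_cast hmi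
    have hNR : (N:ℝ) = 2*m := by exact_mod_cast hm ▸ (by push_cast; ring : ((m+m:ℕ):ℝ) = 2*(m:ℝ))
    rw [hNR]; linarith
  have hiN : (i:ℝ) ≤ N := by exact_mod_cast hi2
  have ha0 : 0 ≤ a := by
    rw [ha_def, sub_nonneg, div_le_one hNpos]; exact hiN
  have hb2 : b ≤ 1/2 := by
    have : (1:ℝ)/2 ≤ ((i:ℝ)-1)/N := by
      rw [le_div_iff₀ hNpos]; linarith
    simp only [hb_def]; linarith
  have hba : b - a = 1/N := by
    simp only [ha_def, hb_def]; field_simp; ring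
  have hba0 : 0 < b - a := by rw [hba]; positivity
  have hne : b - a ≠ 0 := ne_of_gt hba0
  have hab : a < b := sub_pos.mp hba0
  have hsub : Set.Icc a b ⊆ Set.Icc (0:ℝ) (1/2) := by
    intro t ht; exact ⟨le_trans ha0 ht.1, le_trans ht.2 hb2⟩
  -- derivative of ψ
  set Ψ' : ℝ → ℝ := fun t => Real.exp (-φ t) * (-φ' t) with hΨ'def
  have hψfun : ψ = fun t => Real.exp (-φ t) := funext hψ
  have hΨ : ∀ t ∈ Set.Icc (0:ℝ) (1/2), HasDerivAt ψ (Ψ' t) t := by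
    intro t ht
    rw [hψfun]
    exact ((hφderiv t ht).neg).exp
  have hderiv : ∀ t ∈ Set.Icc (0:ℝ) (1/2), deriv ψ t = Ψ' t :=
    fun t ht => (hΨ t ht).deriv
  -- continuity
  have hφcont : ContinuousOn φ (Set.Icc (0:ℝ) (1/2)) :=
    fun t ht => (hφderiv t ht).continuousAt.continuousWithinAt
  have hψcont : ContinuousOn ψ (Set.Icc a b) :=
    fun t ht => (hΨ t (hsub ht)).continuousAt.continuousWithinAt
  -- MVT for ψ
  obtain ⟨c, hc, hceq⟩ := exists_hasDerivAt_eq_slope ψ Ψ' hab hψcont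
    (fun t ht => hΨ t (hsub ⟨le_of_lt ht.1, le_of_lt ht.2⟩))
  have hcmem : c ∈ Set.Icc (0:ℝ) (1/2) := hsub ⟨le_of_lt hc.1, le_of_lt hc.2⟩
  -- MVT for φ (positivity of increment)
  obtain ⟨ξ, hξ, hξeq⟩ := exists_hasDerivAt_eq_slope φ φ' hab
    (hφcont.mono hsub)
    (fun t ht => hφderiv t (hsub ⟨le_of_lt ht.1, le_of_lt ht.2⟩))
  have hxpos : 0 ≤ φ b - φ a := by
    have h1 : 0 < φ' ξ := hφ'pos ξ (hsub ⟨le_of_lt hξ.1, le_of_lt hξ.2⟩)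
    have h2 : φ b - φ a = φ' ξ * (b - a) := by
      rw [hξeq, div_mul_cancel₀ _ hne]
    rw [h2]; exact le_of_lt (mul_pos h1 hba0)
  set M : ℝ := sSup ((fun t => |deriv ψ t|) '' Set.Icc (0:ℝ) (1/2)) with hM
  have hbdd : BddAbove ((fun t => |deriv ψ t|) '' Set.Icc (0:ℝ) (1/2)) := by
    apply IsCompact.bddAbove_image isCompact_Icc
    apply ContinuousOn.abs
    apply ContinuousOn.congr _ hderiv
    exact (Real.continuous_exp.comp_continuousOn hφcont.neg).mul hφ'cont.neg
  have hcM : |Ψ' c| ≤ M := by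
    rw [← hderiv c hcmem]
    exact le_csSup hbdd ⟨c, hcmem, rfl⟩
  have hM0 : 0 ≤ M := le_trans (abs_nonneg _) hcM
  -- ψ a - ψ b ≤ M / N
  have hslope : ψ a - ψ b ≤ M / N := by
    have h1 : ψ a - ψ b = -(Ψ' c) * (b - a) := by
      rw [hceq]; field_simp; ring
    rw [h1, hba]
    have h2 : -(Ψ' c) ≤ |Ψ' c| := neg_le_abs _
    have h3 : -(Ψ' c) ≤ M := le_trans h2 hcM
    rw [div_eq_mul_one_div M N]  -- M/N = M * (1/N)?
    have : (0:ℝ) ≤ 1/N := by positivity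
    nlinarith
  -- rewrite LHS
  have hψa : ψ a = Real.exp (-φ a) := hψ a
  have hψapos : 0 ≤ ψ a := by rw [hψa]; positivity
  set x : ℝ := φ b - φ a with hx_def
  have hrw : (σ * ε / α) * (φ b - φ a) / ε = (σ/α) * x := by
    field_simp; ring
  have hexp : (1 - Real.exp (-x)) * ψ a = ψ a - ψ b := by
    rw [hψ a, hψ b, hx_def]
    rw [sub_mul, one_mul, ← Real.exp_add]
    ring_nf
  calc min ((σ * ε / α) * (φ b - φ a) / ε) 1 * ψ a
      = min ((σ/α) * x) 1 * ψ a := by rw [hrw]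
    _ ≤ (max (σ/α) 1 * min x 1) * ψ a :=
        mul_le_mul_of_nonneg_right (min_scale _ _ hxpos) hψapos
    _ ≤ (max (σ/α) 1 * (2 * (1 - Real.exp (-x)))) * ψ a := by
        apply mul_le_mul_of_nonneg_right _ hψapos
        apply mul_le_mul_of_nonneg_left (min_le_two_exp x hxpos)
        exact le_trans zero_le_one (le_max_right _ _)
    _ = max (σ/α) 1 * 2 * (ψ a - ψ b) := by rw [← hexp]; ring
    _ ≤ max (σ/α) 1 * 2 * (M / N) := by
        apply mul_le_mul_of_nonneg_left hslope
        positivity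
    _ = 2 * max (σ / α) 1 * (1 / N) * M := by ring
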